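/- arXiv:1101.5598 — 3 statements merged into one kernel-verified Lean document; each statement's English description precedes it below -/
import Mathlib

section
/- If finite nonempty subsets S', T', U' of a group G fulfill the TPP, then there exist subsets S, T, U of G with |S| = |S'|, |T| = |T'|, |U| = |U'|, such that S, T, U fulfill the TPP, each contains the identity, and the pairwise intersections S ∩ T, T ∩ U, S ∩ U all equal {1}. -/
variable {G : Type*} [Group G]

def Q (X : Set G) : Set G := {g | ∃ x ∈ X, ∃ y ∈ X, g = x * y⁻¹}

def TPP (S T U : Set G) : Prop :=
  ∀ s ∈ Q S, ∀ t ∈ Q T, ∀ u ∈ Q U, (s * t * u = 1 ↔ s = 1 ∧ t = 1 ∧ u = 1)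

lemma Q_image_mul_right (X : Set G) (g : G) : Q ((· * g) '' X) = Q X := by
  ext a
  constructor
  · rintro ⟨x, ⟨x', hx', rfl⟩, y, ⟨y', hy', rfl⟩, rfl⟩
    exact ⟨x', hx', y', hy', by group⟩
  · rintro ⟨x, hx, y, hy, rfl⟩
    exact ⟨x * g, ⟨x, hx, rfl⟩, y * g, ⟨y, hy, rfl⟩, by group⟩

lemma one_mem_Q {X : Set G} (hX : (1:G) ∈ X) : (1:G) ∈ Q X :=
  ⟨1, hX, 1, hX, by group⟩

lemma mem_Q_of_mem {X : Set G} {x : G} (hx : x ∈ X) (h1 : (1:G) ∈ X) : x ∈ Q X :=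
  ⟨x, hx, 1, h1, by group⟩

lemma inv_mem_Q_of_mem {X : Set G} {x : G} (hx : x ∈ X) (h1 : (1:G) ∈ X) : x⁻¹ ∈ Q X :=
  ⟨1, h1, x, hx, by group⟩

theorem main_result (S' T' U' : Set G) (hS : S'.Nonempty) (hT : T'.Nonempty)
    (hU : U'.Nonempty) (hSf : S'.Finite) (hTf : T'.Finite) (hUf : U'.Finite)
    (h : TPP S' T' U') :
    ∃ S T U : Set G, S.ncard = S'.ncard ∧ T.ncard = T'.ncard ∧ U.ncard = U'.ncard ∧
      TPP S T U ∧ (1 : G) ∈ S ∧ (1 : G) ∈ T ∧ (1 : G) ∈ U ∧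
      S ∩ T = {1} ∧ T ∩ U = {1} ∧ S ∩ U = {1} := by
  obtain ⟨s₀, hs₀⟩ := hS
  obtain ⟨t₀, ht₀⟩ := hT
  obtain ⟨u₀, hu₀⟩ := hU
  refine ⟨(· * s₀⁻¹) '' S', (· * t₀⁻¹) '' T', (· * u₀⁻¹) '' U', ?_, ?_, ?_, ?_, ?_, ?_, ?_, ?_, ?_, ?_⟩
  · exact Set.ncard_image_of_injective _ (mul_left_injective _)
  · exact Set.ncard_image_of_injective _ (mul_left_injective _)
  · exact Set.ncard_image_of_injective _ (mul_left_injective _)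
  · unfold TPP
    rw [Q_image_mul_right, Q_image_mul_right, Q_image_mul_right]
    exact h
  · exact ⟨s₀, hs₀, mul_inv_cancel s₀⟩
  · exact ⟨t₀, ht₀, mul_inv_cancel t₀⟩
  · exact ⟨u₀, hu₀, mul_inv_cancel u₀⟩
  all_goals {
    ext x
    simp only [Set.mem_inter_iff, Set.mem_singleton_iff]
    constructor
    · rintro ⟨hx1, hx2⟩
      have h1S : (1:G) ∈ (· * s₀⁻¹) '' S' := ⟨s₀, hs₀, mul_inv_cancel s₀⟩
      have h1T : (1:G) ∈ (· * t₀⁻¹) '' T' := ⟨t₀, ht₀, mul_inv_cancel t₀⟩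
      have h1U : (1:G) ∈ (· * u₀⁻¹) '' U' := ⟨u₀, hu₀, mul_inv_cancel u₀⟩
      have hTPP : TPP ((· * s₀⁻¹) '' S') ((· * t₀⁻¹) '' T') ((· * u₀⁻¹) '' U') := by
        unfold TPP
        rw [Q_image_mul_right, Q_image_mul_right, Q_image_mul_right]
        exact h
      first
      | exact ((hTPP x (mem_Q_of_mem hx1 h1S) x⁻¹ (inv_mem_Q_of_mem hx2 h1T) 1
          (one_mem_Q h1U)).mp (by group)).1
      | exact ((hTPP 1 (one_mem_Q h1S) x (mem_Q_of_mem hx1 h1T) x⁻¹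
          (inv_mem_Q_of_mem hx2 h1U)).mp (by group)).2.1
      | exact ((hTPP x (mem_Q_of_mem hx1 h1S) 1 (one_mem_Q h1T) x⁻¹
          (inv_mem_Q_of_mem hx2 h1U)).mp (by group)).1
    · rintro rfl
      exact ⟨⟨_, by assumption, mul_inv_cancel _⟩, ⟨_, by assumption, mul_inv_cancel _⟩⟩
  }
end

section
/- If nonempty subsets S, T, U of a finite group G fulfill the TPP, then |Q(S)| + |Q(T)| + |Q(U)| ≤ |G| + 2. -/
variable {G : Type*} [Group G]

theorem sum_card_Q_le [Finite G] (S T U : Set G) (hS : S.Nonempty) (hT : T.Nonempty)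
    (hU : U.Nonempty) (h : TPP S T U) :
    (Q S).ncard + (Q T).ncard + (Q U).ncard ≤ Nat.card G + 2 := by
  have hinv : ∀ (X : Set G) (x : G), x ∈ Q X → x⁻¹ ∈ Q X := by
    rintro X x ⟨a, ha, b, hb, rfl⟩
    exact ⟨b, hb, a, ha, by group⟩
  have h1 : ∀ (X : Set G), X.Nonempty → (1 : G) ∈ Q X := by
    rintro X ⟨a, ha⟩
    exact ⟨a, ha, a, ha, by group⟩
  have hAB : Q S ∩ Q T = {1} := by
    apply Set.eq_singleton_iff_unique_mem.mpr
    refine ⟨⟨h1 S hS, h1 T hT⟩, ?_⟩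
    rintro x ⟨hx1, hx2⟩
    exact ((h x hx1 x⁻¹ (hinv T x hx2) 1 (h1 U hU)).mp (by group)).1
  have hAC : Q S ∩ Q U = {1} := by
    apply Set.eq_singleton_iff_unique_mem.mpr
    refine ⟨⟨h1 S hS, h1 U hU⟩, ?_⟩
    rintro x ⟨hx1, hx2⟩
    exact ((h x hx1 1 (h1 T hT) x⁻¹ (hinv U x hx2)).mp (by group)).1
  have hBC : Q T ∩ Q U = {1} := by
    apply Set.eq_singleton_iff_unique_mem.mpr
    refine ⟨⟨h1 T hT, h1 U hU⟩, ?_⟩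
    rintro x ⟨hx1, hx2⟩
    exact ((h 1 (h1 S hS) x hx1 x⁻¹ (hinv U x hx2)).mp (by group)).2.1
  have h2 : (Q S ∪ Q T) ∩ Q U = {1} := by
    rw [Set.union_inter_distrib_right, hAC, hBC, Set.union_self]
  have e1 := Set.ncard_union_add_ncard_inter (Q S) (Q T)
  have e2 := Set.ncard_union_add_ncard_inter (Q S ∪ Q T) (Q U)
  rw [hAB] at e1
  rw [h2] at e2
  simp only [Set.ncard_singleton] at e1 e2
  have hle : (Q S ∪ Q T ∪ Q U).ncard ≤ Nat.card G := by
    rw [← Set.ncard_univ G]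
    exact Set.ncard_le_ncard (Set.subset_univ _) Set.finite_univ
  omega
end

section
/- If nonempty subsets S, T, U of a finite group G fulfill the TPP, then |S| + |T| + |U| ≤ |G| + 2. -/
variable {G : Type*} [Group G]

theorem sum_card_le [Finite G] (S T U : Set G) (hS : S.Nonempty) (hT : T.Nonempty)
    (hU : U.Nonempty) (h : TPP S T U) :
    S.ncard + T.ncard + U.ncard ≤ Nat.card G + 2 := by
  obtain ⟨s₀, hs₀⟩ := hS
  obtain ⟨t₀, ht₀⟩ := hT
  obtain ⟨u₀, hu₀⟩ := hU
  set A : Set G := (· * s₀⁻¹) '' S with hA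
  set B : Set G := (· * t₀⁻¹) '' T with hB
  set C : Set G := (· * u₀⁻¹) '' U with hC
  have hAS : A.ncard = S.ncard := Set.ncard_image_of_injective _ (mul_left_injective _)
  have hBT : B.ncard = T.ncard := Set.ncard_image_of_injective _ (mul_left_injective _)
  have hCU : C.ncard = U.ncard := Set.ncard_image_of_injective _ (mul_left_injective _)
  have h1A : (1 : G) ∈ A := ⟨s₀, hs₀, mul_inv_cancel s₀⟩
  have h1B : (1 : G) ∈ B := ⟨t₀, ht₀, mul_inv_cancel t₀⟩
  have h1C : (1 : G) ∈ C := ⟨u₀, hu₀, mul_inv_cancel u₀⟩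
  have hQA : ∀ g ∈ A, g ∈ Q S := by
    rintro g ⟨s, hs, rfl⟩; exact ⟨s, hs, s₀, hs₀, rfl⟩
  have hQB : ∀ g ∈ B, g ∈ Q T := by
    rintro g ⟨t, ht, rfl⟩; exact ⟨t, ht, t₀, ht₀, rfl⟩
  have hQC : ∀ g ∈ C, g ∈ Q U := by
    rintro g ⟨u, hu, rfl⟩; exact ⟨u, hu, u₀, hu₀, rfl⟩
  have hQB' : ∀ g ∈ B, g⁻¹ ∈ Q T := by
    rintro g ⟨t, ht, rfl⟩; exact ⟨t₀, ht₀, t, ht, by group⟩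
  have hQC' : ∀ g ∈ C, g⁻¹ ∈ Q U := by
    rintro g ⟨u, hu, rfl⟩; exact ⟨u₀, hu₀, u, hu, by group⟩
  have h1S : (1 : G) ∈ Q S := ⟨s₀, hs₀, s₀, hs₀, (mul_inv_cancel s₀).symm⟩
  have h1T : (1 : G) ∈ Q T := ⟨t₀, ht₀, t₀, ht₀, (mul_inv_cancel t₀).symm⟩
  have h1U : (1 : G) ∈ Q U := ⟨u₀, hu₀, u₀, hu₀, (mul_inv_cancel u₀).symm⟩
  have hAB : Disjoint (A \ {1}) (B \ {1}) := by
    rw [Set.disjoint_left]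
    rintro g ⟨hgA, hg1⟩ ⟨hgB, -⟩
    exact hg1 ((h g (hQA g hgA) g⁻¹ (hQB' g hgB) 1 h1U).mp (by group)).1
  have hAC : Disjoint (A \ {1}) (C \ {1}) := by
    rw [Set.disjoint_left]
    rintro g ⟨hgA, hg1⟩ ⟨hgC, -⟩
    exact hg1 ((h g (hQA g hgA) 1 h1T g⁻¹ (hQC' g hgC)).mp (by group)).1
  have hBC : Disjoint (B \ {1}) (C \ {1}) := by
    rw [Set.disjoint_left]
    rintro g ⟨hgB, hg1⟩ ⟨hgC, -⟩
    exact hg1 ((h 1 h1S g (hQB g hgB) g⁻¹ (hQC' g hgC)).mp (by group)).2.1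
  have hfin : ∀ X : Set G, X.Finite := fun X => Set.toFinite X
  have hunion : ((A \ {1}) ∪ (B \ {1}) ∪ (C \ {1})).ncard
      = (A \ {1}).ncard + (B \ {1}).ncard + (C \ {1}).ncard := by
    rw [Set.ncard_union_eq (Set.disjoint_union_left.mpr ⟨hAC, hBC⟩)
          ((hfin _).union (hfin _)) (hfin _),
        Set.ncard_union_eq hAB (hfin _) (hfin _)]
  have hle : ((A \ {1}) ∪ (B \ {1}) ∪ (C \ {1})).ncard ≤ Nat.card G - 1 := by
    have hsub : (A \ {1}) ∪ (B \ {1}) ∪ (C \ {1}) ⊆ (Set.univ : Set G) \ {1} := by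
      intro g hg
      rcases hg with (hg | hg) | hg <;>
        exact ⟨Set.mem_univ _, hg.2⟩
    calc ((A \ {1}) ∪ (B \ {1}) ∪ (C \ {1})).ncard
        ≤ ((Set.univ : Set G) \ {1}).ncard := Set.ncard_le_ncard hsub (hfin _)
      _ = Nat.card G - 1 := by
          rw [Set.ncard_diff (by simp) (hfin _), Set.ncard_univ, Set.ncard_singleton]
  have hA' : (A \ {1}).ncard + 1 = A.ncard := Set.ncard_diff_singleton_add_one h1A (hfin _)
  have hB' : (B \ {1}).ncard + 1 = B.ncard := Set.ncard_diff_singleton_add_one h1B (hfin _)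
  have hC' : (C \ {1}).ncard + 1 = C.ncard := Set.ncard_diff_singleton_add_one h1C (hfin _)
  have hGpos : 1 ≤ Nat.card G := Nat.one_le_iff_ne_zero.mpr Nat.card_pos.ne'
  omega
end
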